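/- Elementary diagram for head steps: if M →h M1 is a head reduction step and M →β M2 is an arbitrary β-reduction step, then there exists a term M' such that M1 ↠β M' and either M2 ≡ M' or M2 →h M' (the head step cannot be duplicated, only erased). -/

import Mathlib

/-- Untyped λ-terms in de Bruijn notation. -/
inductive Lam : Type
  | var : Nat → Lam
  | app : Lam → Lam → Lam
  | lam : Lam → Lam
  deriving DecidableEq

namespace Lam

/-- Lift (shift) free variables ≥ `d` by one. -/
def lift (d : Nat) : Lam → Lam
  | var n => if n < d then var n else var (n + 1)
  | app s t => app (lift d s) (lift d t)
  | lam t => lam (lift (d + 1) t)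

/-- Capture-avoiding substitution of `u` for the variable with index `k`. -/
def subst (k : Nat) (u : Lam) : Lam → Lam
  | var n => if n = k then u else if k < n then var (n - 1) else var n
  | app s t => app (subst k u s) (subst k u t)
  | lam t => lam (subst (k + 1) (lift 0 u) t)

/-- One-step β-reduction `→β` (compatible closure of the β-rule). -/
inductive Step : Lam → Lam → Prop
  | beta (t u : Lam) : Step (app (lam t) u) (subst 0 u t)
  | appL {s s' : Lam} (t : Lam) : Step s s' → Step (app s t) (app s' t)
  | appR (s : Lam) {t t' : Lam} : Step t t' → Step (app s t) (app s t')
  | lam {t t' : Lam} : Step t t' → Step (lam t) (lam t')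

/-- Many-step β-reduction `↠β`. -/
def Red : Lam → Lam → Prop := Relation.ReflTransGen Step

/-- β-convertibility `=β`. -/
def Conv : Lam → Lam → Prop := Relation.EqvGen Step

/-- `Y` is a fixed point combinator: `Y x =β x (Y x)` for a fresh variable `x`. -/
def isFPC (Y : Lam) : Prop :=
  Conv (app (lift 0 Y) (var 0)) (app (var 0) (app (lift 0 Y) (var 0)))

/-- `M P^n`: `M` applied to `n` copies of `P`. -/
def appIter (M P : Lam) : Nat → Lam
  | 0 => M
  | n + 1 => appIter (app M P) P n

/-- `I = λx.x` -/
def K_I : Lam := lam (var 0)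

/-- `S = λxyz.xz(yz)` -/
def K_S : Lam := lam (lam (lam (app (app (var 2) (var 0)) (app (var 1) (var 0)))))

/-- `B = λxyz.x(yz)` -/
def K_B : Lam := lam (lam (lam (app (var 2) (app (var 1) (var 0)))))

/-- `δ = λab.b(ab)` -/
def K_delta : Lam := lam (lam (app (var 0) (app (var 1) (var 0))))

/-- `ω_f = λx.f(xx)` (with `f` the variable bound just outside). -/
def K_omega : Lam := lam (app (var 1) (app (var 0) (var 0)))

/-- Curry's fpc `Y0 = λf.ω_f ω_f`. -/
def Y0 : Lam := lam (app K_omega K_omega)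

/-- `η = λxf.f(xxf)` -/
def K_eta : Lam := lam (lam (app (var 0) (app (app (var 1) (var 1)) (var 0))))

/-- Turing's fpc `Y1 = ηη`. -/
def Y1 : Lam := app K_eta K_eta

/-- One head reduction step: contraction of the head redex. -/
inductive Head : Lam → Lam → Prop
  | beta (t u : Lam) : Head (app (lam t) u) (subst 0 u t)
  | app {s s' : Lam} (t : Lam) : (∀ u, s ≠ lam u) → Head s s' → Head (app s t) (app s' t)
  | lam {t t' : Lam} : Head t t' → Head (lam t) (lam t')

/-- Exactly `k` head reduction steps. -/
def HeadN : Nat → Lam → Lam → Prop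
  | 0, s, t => s = t
  | k + 1, s, t => ∃ u, Head s u ∧ HeadN k u t

/-- Exactly `k` β-reduction steps. -/
def StepN : Nat → Lam → Lam → Prop
  | 0, s, t => s = t
  | k + 1, s, t => ∃ u, Step s u ∧ StepN k u t

lemma lift_lift : ∀ (t : Lam) (d e : Nat), d ≤ e →
    lift d (lift e t) = lift (e + 1) (lift d t) := by
  intro t
  induction t with
  | var n =>
      intro d e h
      simp only [lift]
      split_ifs <;> simp only [lift] <;> split_ifs <;> first | rfl | omega
  | app s t ihs iht => intro d e h; simp [lift, ihs d e h, iht d e h]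
  | lam t ih => intro d e h; simp [lift, ih (d+1) (e+1) (by omega)]

lemma subst_lift : ∀ (t : Lam) (j : Nat) (c : Lam), subst j c (lift j t) = t := by
  intro t
  induction t with
  | var n =>
      intro j c
      simp only [lift]
      split_ifs <;> simp only [subst] <;> split_ifs <;> first | rfl | omega |
        (simp only [Lam.var.injEq]; omega)
  | app s t ihs iht => intro j c; simp [lift, subst, ihs, iht]
  | lam t ih => intro j c; simp [lift, subst, ih]

lemma lift_subst_le : ∀ (t : Lam) (k d : Nat) (u : Lam), k ≤ d →
    lift d (subst k u t) = subst k (lift d u) (lift (d+1) t) := by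
  intro t
  induction t with
  | var n =>
      intro k d u h
      simp only [subst, lift]
      split_ifs <;> simp only [subst, lift] <;> split_ifs <;>
        first | rfl | omega | (simp only [Lam.var.injEq]; omega)
  | app s t ihs iht => intro k d u h; simp [lift, subst, ihs _ _ _ h, iht _ _ _ h]
  | lam t ih =>
      intro k d u h
      simp only [lift, subst, ih (k+1) (d+1) (lift 0 u) (by omega)]
      rw [lift_lift u 0 d (by omega)]

lemma lift_subst_ge : ∀ (t : Lam) (k d : Nat) (u : Lam), d ≤ k →
    lift d (subst k u t) = subst (k+1) (lift d u) (lift d t) := by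
  intro t
  induction t with
  | var n =>
      intro k d u h
      simp only [subst, lift]
      split_ifs <;> simp only [subst, lift] <;> split_ifs <;>
        first | rfl | omega | (simp only [Lam.var.injEq]; omega)
  | app s t ihs iht => intro k d u h; simp [lift, subst, ihs _ _ _ h, iht _ _ _ h]
  | lam t ih =>
      intro k d u h
      simp only [lift, subst, ih (k+1) (d+1) (lift 0 u) (by omega)]
      rw [lift_lift u 0 d (by omega)]

lemma subst_subst : ∀ (t : Lam) (j k : Nat) (b u : Lam), j ≤ k →
    subst k u (subst j b t) = subst j (subst k u b) (subst (k+1) (lift j u) t) := by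
  intro t
  induction t with
  | var n =>
      intro j k b u h
      simp only [subst]
      split_ifs <;>
        first
          | rfl
          | omega
          | (simp only [Lam.var.injEq]; omega)
          | (simp only [subst]; split_ifs <;>
              first
                | rfl
                | omega
                | (simp only [Lam.var.injEq]; omega)
                | (exact (subst_lift u j (subst k u b)).symm))
  | app s t ihs iht => intro j k b u h; simp [subst, ihs _ _ _ _ h, iht _ _ _ _ h]
  | lam t ih =>
      intro j k b u h
      simp only [subst, ih (j+1) (k+1) (lift 0 b) (lift 0 u) (by omega)]
      rw [lift_subst_ge b k 0 u (by omega), lift_lift u 0 j (by omega)]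

lemma lift_step {t t' : Lam} (h : Step t t') : ∀ d, Step (lift d t) (lift d t') := by
  induction h with
  | beta t u =>
      intro d
      rw [lift_subst_le t 0 d u (by omega)]
      exact Step.beta _ _
  | appL t _ ih => intro d; exact Step.appL _ (ih d)
  | appR s _ ih => intro d; exact Step.appR _ (ih d)
  | lam _ ih => intro d; exact Step.lam (ih (d+1))

lemma subst_stepL {t t' : Lam} (h : Step t t') :
    ∀ k u, Step (subst k u t) (subst k u t') := by
  induction h with
  | beta t b =>
      intro k u
      rw [subst_subst t 0 k b u (by omega)]
      exact Step.beta _ _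
  | appL t _ ih => intro k u; exact Step.appL _ (ih k u)
  | appR s _ ih => intro k u; exact Step.appR _ (ih k u)
  | lam _ ih => intro k u; exact Step.lam (ih (k+1) (lift 0 u))

lemma redAppL {s s'} (t : Lam) (h : Red s s') : Red (app s t) (app s' t) :=
  Relation.ReflTransGen.lift (fun x => app x t) (fun _ _ h => Step.appL t h) _ _ h

lemma redAppR (s : Lam) {t t'} (h : Red t t') : Red (app s t) (app s t') :=
  Relation.ReflTransGen.lift (fun x => app s x) (fun _ _ h => Step.appR s h) _ _ h

lemma redLam {t t'} (h : Red t t') : Red (lam t) (lam t') :=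
  Relation.ReflTransGen.lift lam (fun _ _ h => Step.lam h) _ _ h

lemma subst_redR : ∀ (t : Lam) (k : Nat) {v v' : Lam}, Step v v' →
    Red (subst k v t) (subst k v' t) := by
  intro t
  induction t with
  | var n =>
      intro k v v' h
      simp only [subst]
      split_ifs
      · exact Relation.ReflTransGen.single h
      · exact Relation.ReflTransGen.refl
      · exact Relation.ReflTransGen.refl
  | app s t ihs iht =>
      intro k v v' h
      exact Relation.ReflTransGen.trans (redAppL _ (ihs k h)) (redAppR _ (iht k h))
  | lam t ih =>
      intro k v v' h
      exact redLam (ih (k+1) (lift_step h 0))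

lemma head_step_lam {s s' s2 : Lam} (hh : Head s s') (hn : ∀ u, s ≠ lam u)
    (hs : Step s s2) (v : Lam) (hv : s2 = lam v) : s2 = s' := by
  cases hh with
  | beta t0 u0 =>
      cases hs with
      | beta => rfl
      | appL _ h => cases h with | lam h => exact absurd hv (by simp)
      | appR => exact absurd hv (by simp)
  | app t hn' hh' =>
      cases hs with
      | beta => exact absurd rfl (hn' _)
      | appL => exact absurd hv (by simp)
      | appR => exact absurd hv (by simp)
  | lam hh' => exact absurd rfl (hn _)

/-- Elementary diagram: a head step `M →h M1` and an arbitrary step `M →β M2` can be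
joined by `M1 ↠β M'` and either `M2 ≡ M'` or `M2 →h M'`. -/
theorem elementary_diagram :
    ∀ M M1 M2 : Lam, Head M M1 → Step M M2 →
      ∃ M' : Lam, Red M1 M' ∧ (M2 = M' ∨ Head M2 M') := by
  intro M M1 M2 hh hs
  induction hh generalizing M2 with
  | beta t u =>
      cases hs with
      | beta => exact ⟨subst 0 u t, Relation.ReflTransGen.refl, Or.inl rfl⟩
      | appL _ h =>
          cases h with
          | lam h =>
              rename_i t'
              exact ⟨subst 0 u t', Relation.ReflTransGen.single (subst_stepL h 0 u),
                Or.inr (Head.beta _ _)⟩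
      | appR _ h =>
          rename_i u'
          exact ⟨subst 0 u' t, subst_redR t 0 h, Or.inr (Head.beta _ _)⟩
  | app t hn hh' ih =>
      rename_i s s'
      cases hs with
      | beta => exact absurd rfl (hn _)
      | appL _ h =>
          rename_i s2
          by_cases hl : ∃ v, s2 = lam v
          · obtain ⟨v, hv⟩ := hl
            have he : s2 = s' := head_step_lam hh' hn h v hv
            subst he
            exact ⟨app s2 t, Relation.ReflTransGen.refl, Or.inl rfl⟩
          · obtain ⟨s'', hr, hd⟩ := ih _ h
            refine ⟨app s'' t, redAppL t hr, ?_⟩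
            cases hd with
            | inl he => exact Or.inl (by rw [he])
            | inr hhd =>
                exact Or.inr (Head.app t (fun u hu => hl ⟨u, hu⟩) hhd)
      | appR _ h =>
          rename_i t2
          exact ⟨app s' t2, Relation.ReflTransGen.single (Step.appR s' h),
            Or.inr (Head.app t2 hn hh')⟩
  | lam hh' ih =>
      cases hs with
      | lam h =>
          obtain ⟨t'', hr, hd⟩ := ih _ h
          refine ⟨lam t'', redLam hr, ?_⟩
          cases hd with
          | inl he => exact Or.inl (by rw [he])
          | inr hhd => exact Or.inr (Head.lam hhd)

end Lam
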